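/- Let m ≥ 1 and let x₀ = k/2^{2m} with k an integer, 0 ≤ k < 2^{2m}, such that D_{2m}(x₀) = 0. Then for every x ∈ [k/2^{2m}, (k+1)/2^{2m}] one has T(x) = T(x₀) + 2^{-2m}·T(2^{2m}(x - x₀)). In other words, the graph of T above [k/2^{2m}, (k+1)/2^{2m}] is a similar copy of the whole graph of T over [0,1], scaled by 2^{-2m} and shifted up by T(x₀). -/

import Mathlib

open Set MeasureTheory ENNReal

/-- `phi x` is the distance from `x` to the nearest integer. -/
noncomputable def phi (x : ℝ) : ℝ := |x - (round x : ℤ)|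

/-- The Takagi function. -/
noncomputable def T (x : ℝ) : ℝ := ∑' n : ℕ, phi (2 ^ n * x) / 2 ^ n

/-- The `n`-th binary digit of `x` (terminating expansion for dyadic rationals). -/
noncomputable def eps (n : ℕ) (x : ℝ) : ℤ := ⌊2 ^ n * x⌋ - 2 * ⌊2 ^ (n - 1) * x⌋

/-- `D k x = ∑_{j=1}^k (-1)^{ε_j(x)}`, the excess of 0 digits over 1 digits. -/
noncomputable def D (k : ℕ) (x : ℝ) : ℤ := ∑ j ∈ Finset.Icc 1 k, (1 - 2 * eps j x)

/-- The level set of the Takagi function at level `y`. -/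
def L (y : ℝ) : Set ℝ := {x | x ∈ Set.Icc (0:ℝ) 1 ∧ T x = y}

/-- `x` is a balanced dyadic rational of order `m`. -/
def BalancedOfOrder (x : ℝ) (m : ℕ) : Prop :=
  x ∈ Set.Ico (0:ℝ) 1 ∧ (∃ k : ℤ, x = (k : ℝ) / 2 ^ (2 * m)) ∧ D (2 * m) x = 0

/-- The generation of a balanced dyadic rational of order `m`:
the number of indices `1 ≤ j ≤ 2m` with `D j x = 0`. -/
noncomputable def generation (x : ℝ) (m : ℕ) : ℕ :=
  ((Finset.Icc 1 (2 * m)).filter (fun j => D j x = 0)).card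

/-- A balanced dyadic rational of order `m` is leading if `D j x ≥ 0` for all `1 ≤ j ≤ 2m`. -/
def Leading (x : ℝ) (m : ℕ) : Prop := ∀ j ∈ Finset.Icc 1 (2 * m), 0 ≤ D j x

/-- The equivalence relation whose classes are the local level sets. -/
def locSetoid : Setoid ℝ where
  r x x' := ∀ n : ℕ, 1 ≤ n → |D n x| = |D n x'|
  iseqv := ⟨fun _ _ _ => rfl, fun h n hn => (h n hn).symm,
    fun h g n hn => (h n hn).trans (g n hn)⟩

/-- The set of local level sets contained in `L y`: the image of `L y ∩ [0,1)`
under the quotient map of `locSetoid`. -/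
def locClasses (y : ℝ) : Set (Quotient locSetoid) :=
  Quotient.mk locSetoid '' (L y ∩ Set.Ico (0:ℝ) 1)

lemma phi_nonneg (x : ℝ) : 0 ≤ phi x := abs_nonneg _

lemma phi_le (x : ℝ) : phi x ≤ 1/2 := by
  simpa [phi] using abs_sub_round x

lemma summable_T (x : ℝ) : Summable (fun n : ℕ => phi (2 ^ n * x) / 2 ^ n) := by
  apply Summable.of_nonneg_of_le
    (fun n => div_nonneg (phi_nonneg _) (by positivity)) (fun n => ?_)
    summable_geometric_two
  have h1 := phi_le (2 ^ n * x)
  have h2 : (0:ℝ) < 2 ^ n := by positivity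
  rw [div_le_iff₀ h2]
  calc phi (2^n*x) ≤ 1/2 := h1
    _ ≤ 1 := by norm_num
    _ ≤ (1/2:ℝ)^n * 2^n := by rw [← mul_pow]; norm_num

lemma phi_int_add (x : ℝ) (M : ℤ) : phi (x + M) = phi x := by
  unfold phi
  rw [round_add_intCast]
  push_cast
  ring_nf

lemma phi_zero : phi 0 = 0 := by simp [phi]

lemma T_int_add (x : ℝ) (M : ℤ) : T (x + M) = T x := by
  unfold T
  congr 1; funext n
  have : (2:ℝ) ^ n * (x + M) = 2 ^ n * x + ((2^n * M : ℤ) : ℝ) := by push_cast; ring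
  rw [this, phi_int_add]

lemma T_int (M : ℤ) : T (M : ℝ) = 0 := by
  have : T ((M:ℝ)) = T (0 + (M:ℝ)) := by norm_num
  rw [this, T_int_add]
  unfold T
  simp [phi_zero]

lemma T_split (x : ℝ) (N : ℕ) :
    T x = (∑ n ∈ Finset.range N, phi (2 ^ n * x) / 2 ^ n) + (1/2^N) * T (2^N * x) := by
  rw [T, ← Summable.sum_add_tsum_nat_add N (summable_T x)]
  congr 1
  rw [T, ← tsum_mul_left]
  congr 1; funext i
  have h1 : (2:ℝ) ^ (i + N) * x = 2 ^ i * (2 ^ N * x) := by rw [pow_add]; ring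
  rw [h1, pow_add]
  ring

lemma phi_line_up (M : ℤ) (y : ℝ) (h1 : (M:ℝ) ≤ y) (h2 : y ≤ M + 1/2) :
    phi y = y - M := by
  rcases lt_or_eq_of_le h2 with h | h
  · have hr : round y = M := by
      rw [round_eq, Int.floor_eq_iff]
      constructor <;> push_cast <;> linarith
    rw [phi, hr, abs_of_nonneg (by linarith)]
  · have hr : round y = M + 1 := by
      rw [round_eq, h]
      have : (M:ℝ) + 1/2 + 1/2 = ((M+1 : ℤ) : ℝ) := by push_cast; ring
      rw [this, Int.floor_intCast]
    rw [phi, hr, h]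
    push_cast
    rw [abs_of_nonpos (by linarith)]
    ring

lemma phi_line_down (M : ℤ) (y : ℝ) (h1 : (M:ℝ) + 1/2 ≤ y) (h2 : y ≤ M + 1) :
    phi y = M + 1 - y := by
  have hr : round y = M + 1 := by
    rw [round_eq, Int.floor_eq_iff]
    constructor <;> push_cast <;> linarith
  rw [phi, hr, abs_of_nonpos (by push_cast; linarith)]
  push_cast
  ring

lemma digit_bounds (a : ℝ) : 0 ≤ ⌊2*a⌋ - 2*⌊a⌋ ∧ ⌊2*a⌋ - 2*⌊a⌋ ≤ 1 := by
  have h1 : (⌊a⌋:ℝ) ≤ a := Int.floor_le a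
  have h2 : a < ⌊a⌋ + 1 := Int.lt_floor_add_one a
  have h3 : (2*⌊a⌋ : ℤ) ≤ ⌊2*a⌋ := by
    apply Int.le_floor.2; push_cast; linarith
  have h4 : ⌊2*a⌋ < 2*⌊a⌋ + 2 := by
    apply Int.floor_lt.2; push_cast; linarith
  omega

lemma phi_affine (q : ℕ) (p : ℤ) (y : ℝ)
    (hq : 1 ≤ q)
    (h1 : (p:ℝ)/2^q ≤ y) (h2 : y ≤ ((p:ℝ)+1)/2^q) :
    phi y = phi ((p:ℝ)/2^q) +
      (1 - 2*((⌊2*((p:ℝ)/2^q)⌋ - 2*⌊(p:ℝ)/2^q⌋ : ℤ) : ℝ)) * (y - (p:ℝ)/2^q) := by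
  obtain ⟨q', rfl⟩ : ∃ q', q = q' + 1 := ⟨q - 1, by omega⟩
  set a : ℝ := (p:ℝ)/2^(q'+1) with ha
  set M : ℤ := ⌊a⌋ with hM
  have hpow : (0:ℝ) < 2^(q'+1) := by positivity
  have hpow' : (0:ℝ) < 2^q' := by positivity
  have hpow2 : (2:ℝ)^(q'+1) = 2*2^q' := by ring
  have hap : a * 2^(q'+1) = p := by rw [ha]; field_simp
  have hMa : (M:ℝ) ≤ a := Int.floor_le a
  have hMa2 : a < M + 1 := Int.lt_floor_add_one a
  set r : ℤ := p - M * 2^(q'+1) with hr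
  have hrr : (r:ℝ) = (a - M) * 2^(q'+1) := by push_cast [hr]; rw [← hap]; ring
  have h5 : a - (M:ℝ) = r / 2^(q'+1) := by rw [hrr]; field_simp
  have hr0 : 0 ≤ r := by
    have : (0:ℝ) ≤ (r:ℝ) := by rw [hrr]; nlinarith
    exact_mod_cast this
  have hya : y ≤ a + 1/2^(q'+1) := by
    have : ((p:ℝ)+1)/2^(q'+1) = a + 1/2^(q'+1) := by rw [ha]; ring
    linarith
  obtain ⟨hd0, hd1⟩ := digit_bounds a
  interval_cases hd : (⌊2*a⌋ - 2*⌊a⌋ : ℤ)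
  · have hfl : ⌊2*a⌋ = 2*M := by omega
    have h2a : 2*a < 2*M + 1 := by
      have := Int.lt_floor_add_one (2*a)
      rw [hfl] at this; push_cast at this; linarith
    have hrlt : r < 2^q' := by
      have : (r:ℝ) < 2^q' := by rw [hrr]; nlinarith
      exact_mod_cast this
    have hrle : (r:ℝ) ≤ 2^q' - 1 := by
      have h6 : r ≤ 2^q' - 1 := by omega
      calc (r:ℝ) ≤ ((2^q' - 1 : ℤ) : ℝ) := by exact_mod_cast h6
        _ = 2^q' - 1 := by push_cast; ring
    have h8 : ((r:ℝ)+1)/2^(q'+1) ≤ 1/2 := by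
      rw [div_le_iff₀ hpow, hpow2]; linarith
    have haM : a + 1/2^(q'+1) ≤ M + 1/2 := by
      have h7 : (a - M) + 1/2^(q'+1) = ((r:ℝ)+1)/2^(q'+1) := by rw [h5]; ring
      linarith
    rw [phi_line_up M y (hMa.trans h1) (by linarith),
        phi_line_up M a hMa (by linarith)]
    push_cast
    ring
  · have hfl : ⌊2*a⌋ = 2*M + 1 := by omega
    have h2a : 2*M + 1 ≤ 2*a := by
      have := Int.floor_le (2*a)
      rw [hfl] at this; push_cast at this; linarith
    have hrlt : r < 2^(q'+1) := by
      have : (r:ℝ) < 2^(q'+1) := by rw [hrr]; nlinarith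
      exact_mod_cast this
    have hrle : (r:ℝ) ≤ 2^(q'+1) - 1 := by
      have h6 : r ≤ 2^(q'+1) - 1 := by omega
      calc (r:ℝ) ≤ ((2^(q'+1) - 1 : ℤ) : ℝ) := by exact_mod_cast h6
        _ = 2^(q'+1) - 1 := by push_cast; ring
    have h8 : ((r:ℝ)+1)/2^(q'+1) ≤ 1 := by
      rw [div_le_iff₀ hpow]; linarith
    have haM : a + 1/2^(q'+1) ≤ M + 1 := by
      have h7 : (a - M) + 1/2^(q'+1) = ((r:ℝ)+1)/2^(q'+1) := by rw [h5]; ring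
      linarith
    rw [phi_line_down M y (by linarith) (by linarith),
        phi_line_down M a (by linarith) (by linarith)]
    push_cast
    ring

/-- Per-term linearity on the dyadic subinterval. -/
lemma phi_term_affine (N : ℕ) (k : ℤ) (x : ℝ) (n : ℕ) (hn : n < N)
    (hx1 : (k:ℝ)/2^N ≤ x) (hx2 : x ≤ ((k:ℝ)+1)/2^N) :
    phi (2^n * x) = phi (2^n * ((k:ℝ)/2^N)) +
      (1 - 2*((eps (n+1) ((k:ℝ)/2^N) : ℤ) : ℝ)) * (2^n * x - 2^n * ((k:ℝ)/2^N)) := by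
  set x₀ : ℝ := (k:ℝ)/2^N with hx₀
  have hqn : n + (N - n) = N := by omega
  have hpowN : (0:ℝ) < 2^N := by positivity
  have hsplit : (2:ℝ)^n * 2^(N-n) = 2^N := by rw [← pow_add, hqn]
  have hNn : (2:ℝ)^N = 2^n * 2^(N-n) := hsplit.symm
  have h2n : (0:ℝ) < 2^n := by positivity
  have h2Nn : (0:ℝ) < 2^(N-n) := by positivity
  have hkey : (k : ℝ) / 2^(N-n) = 2^n * x₀ := by
    rw [hx₀, hNn, div_eq_iff (by positivity : ((2:ℝ)^(N-n)) ≠ 0)]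
    field_simp
  have hkey2 : ((k : ℝ) + 1) / 2^(N-n) = 2^n * x₀ + 2^n/2^N := by
    rw [add_div, hkey]
    congr 1
    rw [hNn, div_eq_div_iff (ne_of_gt h2Nn) (by positivity)]
    ring
  have hy1 : (k : ℝ)/2^(N-n) ≤ 2^n * x := by
    rw [hkey]; exact mul_le_mul_of_nonneg_left hx1 h2n.le
  have hy2 : 2^n * x ≤ ((k : ℝ)+1)/2^(N-n) := by
    rw [hkey2]
    have h9 : 2^n * x ≤ 2^n * (((k:ℝ)+1)/2^N) := mul_le_mul_of_nonneg_left hx2 h2n.le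
    have heq : (2:ℝ)^n * (((k:ℝ)+1)/2^N) = 2^n * x₀ + 2^n/2^N := by
      rw [hx₀]; ring
    linarith [heq ▸ h9]
  have := phi_affine (N - n) k (2^n * x) (by omega) hy1 hy2
  rw [hkey] at this
  rw [this]
  have heps : eps (n+1) x₀ = ⌊2*(2^n*x₀)⌋ - 2*⌊2^n*x₀⌋ := by
    unfold eps
    have h1 : (2:ℝ)^(n+1) * x₀ = 2*(2^n*x₀) := by rw [pow_succ]; ring
    have h2 : n + 1 - 1 = n := by omega
    rw [h1, h2]
  rw [heps]

lemma head_eq (N : ℕ) (hN : 1 ≤ N) (k : ℤ) (x : ℝ)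
    (hx1 : (k:ℝ)/2^N ≤ x) (hx2 : x ≤ ((k:ℝ)+1)/2^N)
    (hbal : D N ((k:ℝ)/2^N) = 0) :
    (∑ n ∈ Finset.range N, phi (2 ^ n * x) / 2 ^ n) =
      ∑ n ∈ Finset.range N, phi (2 ^ n * ((k:ℝ)/2^N)) / 2 ^ n := by
  set x₀ : ℝ := (k:ℝ)/2^N with hx₀
  have hterm : ∀ n ∈ Finset.range N,
      phi (2^n * x) / 2^n = phi (2^n * x₀) / 2^n +
        (1 - 2*((eps (n+1) x₀ : ℤ) : ℝ)) * (x - x₀) := by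
    intro n hn
    rw [Finset.mem_range] at hn
    have h2n : (0:ℝ) < 2^n := by positivity
    rw [phi_term_affine N k x n hn hx1 hx2, add_div]
    congr 1
    rw [div_eq_iff (ne_of_gt h2n)]
    ring
  rw [Finset.sum_congr rfl hterm, Finset.sum_add_distrib, ← Finset.sum_mul]
  have hsum : (∑ n ∈ Finset.range N, (1 - 2*((eps (n+1) x₀ : ℤ) : ℝ))) = 0 := by
    have : (∑ n ∈ Finset.range N, (1 - 2*(eps (n+1) x₀))) = D N x₀ := by
      rw [D, ← Finset.Ico_add_one_right_eq_Icc, Finset.sum_Ico_eq_sum_range]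
      apply Finset.sum_congr (by norm_num)
      intro i _
      rw [add_comm 1 i]
    have h0 : (∑ n ∈ Finset.range N, (1 - 2*(eps (n+1) x₀))) = 0 := this.trans hbal
    calc (∑ n ∈ Finset.range N, ((1:ℝ) - 2*((eps (n+1) x₀ : ℤ) : ℝ)))
        = (((∑ n ∈ Finset.range N, (1 - 2*(eps (n+1) x₀)) : ℤ)) : ℝ) := by push_cast; ring
      _ = 0 := by rw [h0]; norm_num
  rw [hsum]
  ring

theorem stmt1 (m : ℕ) (hm : 1 ≤ m) (k : ℤ) (hk0 : 0 ≤ k) (hk1 : k < 2 ^ (2 * m))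
    (hbal : D (2 * m) ((k : ℝ) / 2 ^ (2 * m)) = 0) :
    ∀ x ∈ Set.Icc ((k : ℝ) / 2 ^ (2 * m)) (((k : ℝ) + 1) / 2 ^ (2 * m)),
      T x = T ((k : ℝ) / 2 ^ (2 * m)) +
        (1 / 2 ^ (2 * m)) * T (2 ^ (2 * m) * (x - (k : ℝ) / 2 ^ (2 * m))) := by
  intro x hx
  obtain ⟨hx1, hx2⟩ := hx
  set N : ℕ := 2 * m with hN
  have hN1 : 1 ≤ N := by omega
  set x₀ : ℝ := (k:ℝ)/2^N with hx₀
  have hpowN : (0:ℝ) < 2^N := by positivity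
  have hcx₀ : (2:ℝ)^N * x₀ = (k:ℝ) := by rw [hx₀]; field_simp
  have hcx : (2:ℝ)^N * x = 2^N * (x - x₀) + (k:ℝ) := by rw [← hcx₀]; ring
  have hTx : T (2^N * x) = T (2^N * (x - x₀)) := by
    rw [hcx]
    exact_mod_cast T_int_add (2^N * (x - x₀)) k
  have hTx₀ : T (2^N * x₀) = 0 := by
    rw [hcx₀]; exact T_int k
  rw [T_split x N, T_split x₀ N, hTx, hTx₀,
      head_eq N hN1 k x hx1 hx2 hbal]
  ring
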